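/- arXiv:quant-ph/0207161 — 2 statements merged into one kernel-verified Lean document; each statement's English description precedes it below -/
import Mathlib

section
/- For a Bell decomposable state ρ with p₄ > 1/2 (equivalently 3+t₁+t₂+t₃ < 2), setting λ = (3+t₁+t₂+t₃)/2 and ρ_s the state with parameters t' given by the projection formula, one has the exact decomposition ρ = λ ρ_s + (1−λ)|ψ⁻⟩⟨ψ⁻|, with λ ∈ [0,1). -/
open Matrix Kronecker Complex BigOperators

noncomputable section

/-- Pauli matrices -/
def σ1 : Matrix (Fin 2) (Fin 2) ℂ := !![0, 1; 1, 0]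
def σ2 : Matrix (Fin 2) (Fin 2) ℂ := !![0, -Complex.I; Complex.I, 0]
def σ3 : Matrix (Fin 2) (Fin 2) ℂ := !![1, 0; 0, -1]

/-- Kronecker product of two 2×2 matrices as a 4×4 matrix in the
computational basis |00⟩,|01⟩,|10⟩,|11⟩. -/
def kron4 (A B : Matrix (Fin 2) (Fin 2) ℂ) : Matrix (Fin 4) (Fin 4) ℂ :=
  Matrix.reindex finProdFinEquiv finProdFinEquiv (A ⊗ₖ B)

/-- Bell-diagonal (Bell decomposable) state with correlation parameters t₁,t₂,t₃. -/
def ρBD (t1 t2 t3 : ℝ) : Matrix (Fin 4) (Fin 4) ℂ :=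
  (1/4 : ℂ) • ((1 : Matrix (Fin 4) (Fin 4) ℂ)
    + (t1 : ℂ) • kron4 σ1 σ1 + (t2 : ℂ) • kron4 σ2 σ2 + (t3 : ℂ) • kron4 σ3 σ3)

/-- rank-one projector |v⟩⟨v| on C⁴ -/
def proj4 (v : Fin 4 → ℂ) : Matrix (Fin 4) (Fin 4) ℂ := Matrix.vecMulVec v (star v)
def proj2 (v : Fin 2 → ℂ) : Matrix (Fin 2) (Fin 2) ℂ := Matrix.vecMulVec v (star v)

/-- The four Bell states -/
def bell : Fin 4 → (Fin 4 → ℂ)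
  | 0 => ![(Real.sqrt 2)⁻¹, 0, 0, (Real.sqrt 2)⁻¹]
  | 1 => ![(Real.sqrt 2)⁻¹, 0, 0, -(Real.sqrt 2)⁻¹]
  | 2 => ![0, (Real.sqrt 2)⁻¹, (Real.sqrt 2)⁻¹, 0]
  | 3 => ![0, (Real.sqrt 2)⁻¹, -(Real.sqrt 2)⁻¹, 0]


lemma K1 : kron4 σ1 σ1 = !![0,0,0,1; 0,0,1,0; 0,1,0,0; 1,0,0,0] := by
  ext i j
  fin_cases i <;> fin_cases j <;>
    norm_num [kron4, Matrix.vecHead, Matrix.vecTail, σ1, kroneckerMap, Matrix.reindex,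
      finProdFinEquiv, Fin.divNat, Fin.modNat]

lemma K2 : kron4 σ2 σ2 = !![0,0,0,-1; 0,0,1,0; 0,1,0,0; -1,0,0,0] := by
  ext i j
  fin_cases i <;> fin_cases j <;>
    norm_num [kron4, Matrix.vecHead, Matrix.vecTail, σ2, kroneckerMap, Matrix.reindex,
      finProdFinEquiv, Fin.divNat, Fin.modNat, Complex.ext_iff]

lemma K3 : kron4 σ3 σ3 = !![1,0,0,0; 0,-1,0,0; 0,0,-1,0; 0,0,0,1] := by
  ext i j
  fin_cases i <;> fin_cases j <;>
    norm_num [kron4, Matrix.vecHead, Matrix.vecTail, σ3, kroneckerMap, Matrix.reindex,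
      finProdFinEquiv, Fin.divNat, Fin.modNat]

lemma sq2 : ((Real.sqrt 2 : ℝ)⁻¹ : ℂ) * ((Real.sqrt 2 : ℝ)⁻¹ : ℂ) = 1/2 := by
  norm_cast
  rw [← mul_inv]
  norm_num [Real.mul_self_sqrt]

lemma P3 : proj4 (bell 3) = !![0,0,0,0; 0,1/2,-1/2,0; 0,-1/2,1/2,0; 0,0,0,0] := by
  ext i j
  fin_cases i <;> fin_cases j <;>
    simp [proj4, bell, Matrix.vecMulVec, Matrix.vecHead, Matrix.vecTail, sq2] <;>
    norm_num

lemma P3' : proj4 (bell 3) = (1/4:ℂ) • ((1 : Matrix (Fin 4) (Fin 4) ℂ)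
    + (-1:ℂ) • kron4 σ1 σ1 + (-1:ℂ) • kron4 σ2 σ2 + (-1:ℂ) • kron4 σ3 σ3) := by
  rw [K1, K2, K3, P3]
  ext i j
  fin_cases i <;> fin_cases j <;> norm_num [Matrix.one_apply, Matrix.vecHead, Matrix.vecTail, Fin.ext_iff]


/-- exact Lewenstein–Sanpera decomposition of a Bell decomposable
state in the singlet tetrahedron: ρ = λρ_s + (1−λ)|ψ⁻⟩⟨ψ⁻| with
λ = (3+t₁+t₂+t₃)/2 ∈ [0,1) and ρ_s the BD state with projected parameters t'. -/
theorem bd_ls_decomposition (t1 t2 t3 : ℝ)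
    (h1 : 0 ≤ 1 + t1 - t2 + t3) (h2 : 0 ≤ 1 - t1 + t2 + t3)
    (h3 : 0 ≤ 1 + t1 + t2 - t3) (h4 : 0 ≤ 1 - t1 - t2 - t3)
    (hent : 3 + t1 + t2 + t3 < 2) :
    ρBD t1 t2 t3 =
      (((3 + t1 + t2 + t3)/2 : ℝ) : ℂ) •
        ρBD ((-1 + t1 - t2 - t3) / (3 + t1 + t2 + t3))
            ((-1 - t1 + t2 - t3) / (3 + t1 + t2 + t3))
            ((-1 - t1 - t2 + t3) / (3 + t1 + t2 + t3))
      + ((1 - (3 + t1 + t2 + t3)/2 : ℝ) : ℂ) • proj4 (bell 3) ∧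
    (3 + t1 + t2 + t3)/2 ∈ Set.Ico (0:ℝ) 1 := by
  have hs0 : 0 ≤ 3 + t1 + t2 + t3 := by linarith
  refine ⟨?_, by constructor <;> [linarith; linarith]⟩
  rcases eq_or_lt_of_le hs0 with hs | hs
  · have e1 : t1 = -1 := by linarith
    have e2 : t2 = -1 := by linarith
    have e3 : t3 = -1 := by linarith
    subst e1 e2 e3
    norm_num
    rw [ρBD, K1, K2, K3, P3]
    ext i j
    fin_cases i <;> fin_cases j <;>
      simp [Matrix.one_apply, Matrix.vecHead, Matrix.vecTail] <;> norm_num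
  · have hsne : ((3 + t1 + t2 + t3 : ℝ) : ℂ) ≠ 0 := Complex.ofReal_ne_zero.mpr (ne_of_gt hs)
    push_cast at hsne
    rw [ρBD, ρBD, P3']
    match_scalars <;> (push_cast; field_simp; try ring)

end
end

section
/- For a Bell decomposable state ρ with p₄ > 1/2 one has the decomposition ρ = Σ_{α=1}^{6} Λ_α |e_α,f_α⟩⟨e_α,f_α| + (1−λ)|ψ⁻⟩⟨ψ⁻|, where Λ₁ = Λ₂ = λ₁⁻/2, Λ₃ = Λ₄ = λ₂⁻/2, Λ₅ = Λ₆ = λ₃⁻/2 with λᵢ⁻ as above, and the product vectors are |x₊⟩⊗|x₋⟩, |x₋⟩⊗|x₊⟩, |y₊⟩⊗|y₋⟩, |y₋⟩⊗|y₊⟩, |z₊⟩⊗|z₋⟩, |z₋⟩⊗|z₊⟩. -/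
open Matrix Kronecker Complex BigOperators

noncomputable section

/-- eigenvectors of σ₁, σ₂, σ₃ with eigenvalues ±1 -/
def xp : Fin 2 → ℂ := ![(Real.sqrt 2)⁻¹, (Real.sqrt 2)⁻¹]
def xm : Fin 2 → ℂ := ![(Real.sqrt 2)⁻¹, -(Real.sqrt 2)⁻¹]
def yp : Fin 2 → ℂ := ![(Real.sqrt 2)⁻¹, Complex.I * (Real.sqrt 2)⁻¹]
def ym : Fin 2 → ℂ := ![(Real.sqrt 2)⁻¹, -Complex.I * (Real.sqrt 2)⁻¹]
def zp : Fin 2 → ℂ := ![1, 0]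
def zm : Fin 2 → ℂ := ![0, 1]

def ρ1m : Matrix (Fin 4) (Fin 4) ℂ :=
  (1/2 : ℂ) • (kron4 (proj2 xp) (proj2 xm) + kron4 (proj2 xm) (proj2 xp))
def ρ2m : Matrix (Fin 4) (Fin 4) ℂ :=
  (1/2 : ℂ) • (kron4 (proj2 yp) (proj2 ym) + kron4 (proj2 ym) (proj2 yp))
def ρ3m : Matrix (Fin 4) (Fin 4) ℂ :=
  (1/2 : ℂ) • (kron4 (proj2 zp) (proj2 zm) + kron4 (proj2 zm) (proj2 zp))

/-- a 2-qubit state is separable if it is a convex combination of tensor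
products of pure-state projectors -/
def IsSepState (ρ : Matrix (Fin 4) (Fin 4) ℂ) : Prop :=
  ∃ (n : ℕ) (w : Fin n → ℝ) (u v : Fin n → (Fin 2 → ℂ)),
    (∀ k, 0 ≤ w k) ∧ (∀ k, ∑ i, Complex.normSq (u k i) = 1) ∧
    (∀ k, ∑ i, Complex.normSq (v k i) = 1) ∧
    ρ = ∑ k, (w k : ℂ) • kron4 (proj2 (u k)) (proj2 (v k))

/-- Kronecker (tensor) product of two qubit vectors, in the basis
|00⟩,|01⟩,|10⟩,|11⟩. -/
def kv (u v : Fin 2 → ℂ) : Fin 4 → ℂ :=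
  ![u 0 * v 0, u 0 * v 1, u 1 * v 0, u 1 * v 1]

lemma finv : ((0:Fin 4):ℕ) = 0 ∧ ((1:Fin 4):ℕ) = 1 ∧ ((2:Fin 4):ℕ) = 2 ∧ ((3:Fin 4):ℕ) = 3 :=
  ⟨rfl, rfl, rfl, rfl⟩

lemma k1 : kron4 σ1 σ1 = !![0,0,0,1;0,0,1,0;0,1,0,0;1,0,0,0] := by
  ext i j; fin_cases i <;> fin_cases j <;>
    norm_num [kron4, σ1, Matrix.kroneckerMap_apply, finProdFinEquiv, Matrix.submatrix_apply,
      Fin.divNat, Fin.modNat, finv.1, finv.2.1, finv.2.2.1, finv.2.2.2]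

lemma k2 : kron4 σ2 σ2 = !![0,0,0,-1;0,0,1,0;0,1,0,0;-1,0,0,0] := by
  ext i j; fin_cases i <;> fin_cases j <;>
    norm_num [kron4, σ2, Matrix.kroneckerMap_apply, finProdFinEquiv, Matrix.submatrix_apply,
      Fin.divNat, Fin.modNat, finv.1, finv.2.1, finv.2.2.1, finv.2.2.2, Complex.ext_iff]

lemma k3 : kron4 σ3 σ3 = !![1,0,0,0;0,-1,0,0;0,0,-1,0;0,0,0,1] := by
  ext i j; fin_cases i <;> fin_cases j <;>
    norm_num [kron4, σ3, Matrix.kroneckerMap_apply, finProdFinEquiv, Matrix.submatrix_apply,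
      Fin.divNat, Fin.modNat, finv.1, finv.2.1, finv.2.2.1, finv.2.2.2]

lemma hsq : ((Real.sqrt 2 : ℝ) : ℂ)⁻¹ * ((Real.sqrt 2 : ℝ) : ℂ)⁻¹ = 1/2 := by
  rw [← mul_inv, ← Complex.ofReal_mul, Real.mul_self_sqrt (by norm_num : (0:ℝ) ≤ 2)]
  norm_num

lemma hpow : ((Real.sqrt 2 : ℝ) : ℂ)^4 = 4 := by
  have h2 : ((Real.sqrt 2 : ℝ) : ℂ)^2 = 2 := by
    rw [← Complex.ofReal_pow, Real.sq_sqrt (by norm_num : (0:ℝ) ≤ 2)]; norm_num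
  rw [show (4:ℕ) = 2*2 from rfl, pow_mul, h2]; norm_num

lemma hI3 : Complex.I^3 = -Complex.I := by
  rw [show (3:ℕ) = 2+1 from rfl, pow_succ, Complex.I_sq]; ring

lemma pxx : proj4 (kv xp xm) = (1/4:ℂ) • !![1,-1,1,-1; -1,1,-1,1; 1,-1,1,-1; -1,1,-1,1] := by
  ext i j; fin_cases i <;> fin_cases j <;>
    simp [proj4, kv, xp, xm, Matrix.vecMulVec_apply, Complex.ofReal_inv] <;>
    (try ring_nf) <;> (try simp [hsq, sq]) <;> (try ring_nf) <;> (try simp [hpow])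
  all_goals try norm_num [Matrix.vecHead, Matrix.vecTail]
  all_goals try simp only [hI3]
  all_goals ring


lemma pxx2 : proj4 (kv xm xp) = (1/4:ℂ) • !![1,1,-1,-1; 1,1,-1,-1; -1,-1,1,1; -1,-1,1,1] := by
  ext i j; fin_cases i <;> fin_cases j <;>
    simp [proj4, kv, xp, xm, yp, ym, zp, zm, bell, Matrix.vecMulVec_apply, Complex.ofReal_inv] <;>
    (try ring_nf) <;> (try simp [hsq, sq]) <;> (try ring_nf) <;> (try simp [hpow])
  all_goals try norm_num [Matrix.vecHead, Matrix.vecTail]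
  all_goals try simp only [hI3]
  all_goals ring <;>
    norm_num [Matrix.vecHead, Matrix.vecTail, pow_succ, Complex.I_sq, mul_comm]

lemma pyy : proj4 (kv yp ym) = (1/4:ℂ) •
    !![1,Complex.I,-Complex.I,1; -Complex.I,1,-1,-Complex.I;
       Complex.I,-1,1,Complex.I; 1,Complex.I,-Complex.I,1] := by
  ext i j; fin_cases i <;> fin_cases j <;>
    simp [proj4, kv, xp, xm, yp, ym, zp, zm, bell, Matrix.vecMulVec_apply, Complex.ofReal_inv] <;>
    (try ring_nf) <;> (try simp [hsq, sq]) <;> (try ring_nf) <;> (try simp [hpow])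
  all_goals try norm_num [Matrix.vecHead, Matrix.vecTail]
  all_goals try simp only [hI3]
  all_goals ring <;>
    norm_num [Matrix.vecHead, Matrix.vecTail, pow_succ, Complex.I_sq, mul_comm]

lemma pyy2 : proj4 (kv ym yp) = (1/4:ℂ) •
    !![1,-Complex.I,Complex.I,1; Complex.I,1,-1,Complex.I;
       -Complex.I,-1,1,-Complex.I; 1,-Complex.I,Complex.I,1] := by
  ext i j; fin_cases i <;> fin_cases j <;>
    simp [proj4, kv, xp, xm, yp, ym, zp, zm, bell, Matrix.vecMulVec_apply, Complex.ofReal_inv] <;>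
    (try ring_nf) <;> (try simp [hsq, sq]) <;> (try ring_nf) <;> (try simp [hpow])
  all_goals try norm_num [Matrix.vecHead, Matrix.vecTail]
  all_goals try simp only [hI3]
  all_goals ring

lemma pzz : proj4 (kv zp zm) = !![0,0,0,0; 0,1,0,0; 0,0,0,0; 0,0,0,0] := by
  ext i j; fin_cases i <;> fin_cases j <;>
    simp [proj4, kv, xp, xm, yp, ym, zp, zm, bell, Matrix.vecMulVec_apply, Complex.ofReal_inv] <;>
    (try ring_nf) <;> (try simp [hsq, sq]) <;> (try ring_nf) <;> (try simp [hpow])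
  all_goals try norm_num [Matrix.vecHead, Matrix.vecTail]
  all_goals try simp only [hI3]
  all_goals ring

lemma pzz2 : proj4 (kv zm zp) = !![0,0,0,0; 0,0,0,0; 0,0,1,0; 0,0,0,0] := by
  ext i j; fin_cases i <;> fin_cases j <;>
    simp [proj4, kv, xp, xm, yp, ym, zp, zm, bell, Matrix.vecMulVec_apply, Complex.ofReal_inv] <;>
    (try ring_nf) <;> (try simp [hsq, sq]) <;> (try ring_nf) <;> (try simp [hpow])
  all_goals try norm_num [Matrix.vecHead, Matrix.vecTail]
  all_goals try simp only [hI3]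
  all_goals ring

lemma pbell : proj4 (bell 3) = (1/2:ℂ) • !![0,0,0,0; 0,1,-1,0; 0,-1,1,0; 0,0,0,0] := by
  ext i j; fin_cases i <;> fin_cases j <;>
    simp [proj4, kv, xp, xm, yp, ym, zp, zm, bell, Matrix.vecMulVec_apply, Complex.ofReal_inv] <;>
    (try ring_nf) <;> (try simp [hsq, sq]) <;> (try ring_nf) <;> (try simp [hpow])
  all_goals try norm_num [Matrix.vecHead, Matrix.vecTail]
  all_goals try simp only [hI3]
  all_goals ring

set_option maxHeartbeats 2000000 in
/-- for a Bell decomposable state with p₄ > 1/2,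
ρ = Σ_{α=1}^{6} Λ_α |e_α,f_α⟩⟨e_α,f_α| + (1−λ)|ψ⁻⟩⟨ψ⁻| with
Λ₁ = Λ₂ = λ₁⁻/2, Λ₃ = Λ₄ = λ₂⁻/2, Λ₅ = Λ₆ = λ₃⁻/2 and product vectors
|x₊⟩⊗|x₋⟩, |x₋⟩⊗|x₊⟩, |y₊⟩⊗|y₋⟩, |y₋⟩⊗|y₊⟩, |z₊⟩⊗|z₋⟩, |z₋⟩⊗|z₊⟩. -/
theorem bd_product_decomposition
    (p1 p2 p3 p4 : ℝ) (hp1 : 0 ≤ p1) (hp2 : 0 ≤ p2) (hp3 : 0 ≤ p3) (hp4 : 0 ≤ p4)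
    (hsum : p1 + p2 + p3 + p4 = 1) (h4 : 1/2 < p4)
    (t1 t2 t3 lam lam1 lam2 lam3 : ℝ)
    (ht1 : t1 = p1 - p2 + p3 - p4) (ht2 : t2 = -p1 + p2 + p3 - p4)
    (ht3 : t3 = p1 + p2 - p3 - p4)
    (hlam : lam = (3 + t1 + t2 + t3)/2)
    (hlam1 : lam1 = (1 - t1 + t2 + t3)/2)
    (hlam2 : lam2 = (1 + t1 - t2 + t3)/2)
    (hlam3 : lam3 = (1 + t1 + t2 - t3)/2) :
    ρBD t1 t2 t3 =
      ((lam1/2 : ℝ) : ℂ) • proj4 (kv xp xm) + ((lam1/2 : ℝ) : ℂ) • proj4 (kv xm xp)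
      + ((lam2/2 : ℝ) : ℂ) • proj4 (kv yp ym) + ((lam2/2 : ℝ) : ℂ) • proj4 (kv ym yp)
      + ((lam3/2 : ℝ) : ℂ) • proj4 (kv zp zm) + ((lam3/2 : ℝ) : ℂ) • proj4 (kv zm zp)
      + ((1 - lam : ℝ) : ℂ) • proj4 (bell 3) := by
  have one4 : (1 : Matrix (Fin 4) (Fin 4) ℂ) = !![1,0,0,0; 0,1,0,0; 0,0,1,0; 0,0,0,1] := by
    ext i j; fin_cases i <;> fin_cases j <;> simp [Matrix.one_apply, Matrix.vecHead, Matrix.vecTail]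
  subst hlam hlam1 hlam2 hlam3 ht1 ht2 ht3
  clear hp1 hp2 hp3 hp4 hsum h4
  rw [ρBD, k1, k2, k3, pxx, pxx2, pyy, pyy2, pzz, pzz2, pbell, one4]
  ext i j
  fin_cases i <;> fin_cases j <;>
    simp [Matrix.add_apply, Matrix.smul_apply, Matrix.vecHead, Matrix.vecTail] <;>
    push_cast <;> ring_nf
end
end
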